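/- Let (G, Σ, χ, w) be a Decoder Retrieval instance and let {a,b} be a one-sided letter pair such that the word w[a,b] is not a palindrome (it does not equal its reverse). Then there exists d ∈ {(a,b),(b,a)} such that every solution D for the instance contains d. -/

import Mathlib

/-- The letter graph `G(D, w)` on vertex set `Fin w.length`: positions `i < j`
are adjacent iff the ordered pair of letters `(w_i, w_j)` lies in the decoder `D`. -/
def letterGraph {A : Type*} (D : Set (A × A)) (w : List A) : SimpleGraph (Fin w.length) where
  Adj i j := (i < j ∧ (w.get i, w.get j) ∈ D) ∨ (j < i ∧ (w.get j, w.get i) ∈ D)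
  symm := by constructor; intro i j h; exact h.symm
  loopless := by constructor; intro i h; rcases h with ⟨h, -⟩ | ⟨h, -⟩ <;> exact lt_irrefl _ h

/-- `D` is a solution for the decoder-retrieval data `(G, χ, w)`: there is a graph
isomorphism from `G` to the letter graph `G(D, w)` that respects the coloring `χ`. -/
def IsSolution {V A : Type*} (G : SimpleGraph V) (χ : V → A) (w : List A)
    (D : Set (A × A)) : Prop :=
  ∃ f : G ≃g letterGraph D w, ∀ v : V, χ v = w.get (f v)

/-- The color class `V_a` as a finset. -/
def classFinset {V A : Type*} [Fintype V] [DecidableEq A] (χ : V → A) (a : A) : Finset V :=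
  Finset.univ.filter fun v => χ v = a

/-- The number of edges of `G` between `V_a` and `V_b` (for `a ≠ b`),
counted as ordered pairs `(u, v)` with `u ∈ V_a`, `v ∈ V_b`, `u ~ v`. -/
def crossCard {V A : Type*} [Fintype V] [DecidableEq A] (G : SimpleGraph V)
    [DecidableRel G.Adj] (χ : V → A) (a b : A) : ℕ :=
  ((classFinset χ a ×ˢ classFinset χ b).filter fun p => G.Adj p.1 p.2).card

/-- The letter pair `{a, b}` is one-sided: `a ≠ b` and `0 < |E(V_a, V_b)| < |V_a| · |V_b|`. -/
def OneSided {V A : Type*} [Fintype V] [DecidableEq A] (G : SimpleGraph V)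
    [DecidableRel G.Adj] (χ : V → A) (a b : A) : Prop :=
  a ≠ b ∧ 0 < crossCard G χ a b ∧
    crossCard G χ a b < (classFinset χ a).card * (classFinset χ b).card

/-- `w[a, b]`: the maximal subsequence of `w` consisting of occurrences of `a` and `b`. -/
def pairWord {A : Type*} [DecidableEq A] (a b : A) (w : List A) : List A :=
  w.filter fun c => c = a ∨ c = b


section ListLemmas

variable {A : Type*} [DecidableEq A]

def degList (a b : A) : List A → List ℕ
  | [] => []
  | c :: t => if c = a then t.count b :: degList a b t else degList a b t

def degListB (a b : A) : List A → List ℕ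
  | [] => []
  | c :: t => (if c = a then [0] else []) ++
      (degListB a b t).map (fun x => x + (if c = b then 1 else 0))

lemma appendDeg (a b : A) (l m : List A) :
    degList a b (l ++ m) = (degList a b l).map (· + m.count b) ++ degList a b m := by
  induction l with
  | nil => simp [degList]
  | cons c t ih =>
    by_cases h : c = a <;> simp [degList, h, ih, List.count_append]

lemma revDeg (a b : A) (w : List A) :
    (↑(degListB a b w) : Multiset ℕ) = ↑(degList a b w.reverse) := by
  induction w with
  | nil => simp [degList, degListB]
  | cons c t ih =>
    have h1 : (↑(degListB a b (c :: t)) : Multiset ℕ)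
        = (if c = a then {0} else 0)
          + Multiset.map (fun x => x + (if c = b then 1 else 0)) ↑(degListB a b t) := by
      by_cases h : c = a <;>
        simp [degListB, h, ← Multiset.map_coe, ← Multiset.cons_coe, ← Multiset.coe_add]
    have h2 : (↑(degList a b (c :: t).reverse) : Multiset ℕ)
        = Multiset.map (fun x => x + (if c = b then 1 else 0)) ↑(degList a b t.reverse)
          + (if c = a then {0} else 0) := by
      rw [List.reverse_cons, appendDeg]
      by_cases h : c = a <;> by_cases h' : c = b <;>
        simp [degList, h, h', ← Multiset.map_coe, ← Multiset.cons_coe, ← Multiset.coe_add,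
          List.count_cons] <;>
        (try (split_ifs <;> simp))
    rw [h1, h2, ih, add_comm]

lemma degBound (a b : A) {x : ℕ} {l : List A} (hx : x ∈ degList a b l) : x ≤ l.count b := by
  induction l with
  | nil => simp [degList] at hx
  | cons c t ih =>
    have hct : t.count b ≤ (c :: t).count b := by
      rw [List.count_cons]; omega
    by_cases h : c = a
    · rw [degList, if_pos h] at hx
      rcases List.mem_cons.mp hx with rfl | hx
      · exact hct
      · exact le_trans (ih hx) hct
    · rw [degList, if_neg h] at hx
      exact le_trans (ih hx) hct

lemma lenCount (a b : A) (hab : a ≠ b) {u : List A} (hu : ∀ c ∈ u, c = a ∨ c = b) :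
    u.length = u.count a + u.count b := by
  induction u with
  | nil => simp
  | cons c t ih =>
    have hc := hu c (by simp)
    have ht : ∀ c ∈ t, c = a ∨ c = b := fun c hcm => hu c (by simp [hcm])
    rcases hc with rfl | rfl <;>
      simp [List.count_cons, ih ht, hab, Ne.symm hab] <;> omega

lemma degInj_aux (a b : A) (hab : a ≠ b) (s s' : List A)
    (hcb : (a :: s).count b = (b :: s').count b)
    (hM : (↑(degList a b (a :: s)) : Multiset ℕ) = ↑(degList a b (b :: s'))) : False := by
  rw [degList, if_pos rfl, degList, if_neg (Ne.symm hab)] at hM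
  have hmem : s.count b ∈ degList a b s' := by
    have : (s.count b) ∈ (↑(degList a b s') : Multiset ℕ) := by rw [← hM]; simp
    simpa using this
  have hle := degBound a b hmem
  have e1 : (a :: s).count b = s.count b := by
    rw [List.count_cons]; simp [hab]
  have e2 : (b :: s').count b = s'.count b + 1 := by
    rw [List.count_cons]; simp
  omega

lemma degInj (a b : A) (hab : a ≠ b) : ∀ (u u' : List A), (∀ c ∈ u, c = a ∨ c = b) →
    (∀ c ∈ u', c = a ∨ c = b) → u.count a = u'.count a → u.count b = u'.count b →
    (↑(degList a b u) : Multiset ℕ) = ↑(degList a b u') → u = u' := by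
  intro u
  induction u with
  | nil =>
    intro u' _ hu' hca hcb _
    have := lenCount a b hab hu'
    simp only [List.count_nil] at hca hcb
    have : u'.length = 0 := by omega
    simpa using List.length_eq_zero_iff.mp this
  | cons c t ih =>
    intro u' hu hu' hca hcb hM
    match u' with
    | [] =>
      exfalso
      have := lenCount a b hab hu
      simp only [List.count_nil] at hca hcb
      simp [hca, hcb] at this
    | c' :: t' =>
      have ht : ∀ x ∈ t, x = a ∨ x = b := fun x hx => hu x (by simp [hx])
      have ht' : ∀ x ∈ t', x = a ∨ x = b := fun x hx => hu' x (by simp [hx])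
      have hc := hu c (by simp)
      have hc' := hu' c' (by simp)
      rcases hc with hc | hc <;> rcases hc' with hc' | hc' <;>
        rw [hc] at hM hca hcb ⊢ <;> rw [hc'] at hM hca hcb ⊢
      · -- heads a, a
        have hcbt : t.count b = t'.count b := by
          rw [List.count_cons, List.count_cons] at hcb
          simpa [Ne.symm hab] using hcb
        have hcat : t.count a = t'.count a := by
          rw [List.count_cons, List.count_cons] at hca
          simpa using hca
        rw [degList, if_pos rfl, degList, if_pos rfl, hcbt] at hM
        have hperm := (Multiset.coe_eq_coe.mp hM).cons_inv
        rw [ih t' ht ht' hcat hcbt (Multiset.coe_eq_coe.mpr hperm)]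
      · exact absurd (degInj_aux a b hab t t' hcb hM) not_false
      · exact absurd (degInj_aux a b hab t' t hcb.symm hM.symm) not_false
      · -- heads b, b
        have hcbt : t.count b = t'.count b := by
          rw [List.count_cons, List.count_cons] at hcb
          simpa using hcb
        have hcat : t.count a = t'.count a := by
          rw [List.count_cons, List.count_cons] at hca
          simpa [hab] using hca
        rw [degList, if_neg (Ne.symm hab), degList, if_neg (Ne.symm hab)] at hM
        rw [ih t' ht ht' hcat hcbt hM]


lemma countPos (b : A) (w : List A) :
    (List.finRange w.length).countP (fun j => decide (w.get j = b)) = w.count b := by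
  induction w with
  | nil => simp
  | cons c t ih =>
    simp only [List.length_cons, List.finRange_succ, List.countP_cons,
      List.countP_map, List.count_cons, Function.comp_def, List.get_cons_succ',
      List.get_cons_zero]
    rw [ih]
    by_cases h : c = b <;> simp [h]


lemma posA (a b : A) (w : List A) :
    (((List.finRange w.length).filter fun i => decide (w.get i = a)).map
      fun i => (List.finRange w.length).countP fun j => decide ((i : Fin w.length) < j ∧ w.get j = b))
      = degList a b w := by
  induction w with
  | nil => simp [degList]
  | cons c t ih =>
    have inner : ∀ i : Fin t.length,
        ((List.finRange (t.length + 1)).countP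
          fun j => decide (Fin.succ i < j ∧ (c :: t).get j = b))
        = (List.finRange t.length).countP fun j => decide (i < j ∧ t.get j = b) := by
      intro i
      simp [List.finRange_succ, List.countP_cons, List.countP_map, Function.comp_def,
        List.get_cons_succ', Fin.succ_lt_succ_iff]
    have head : ((List.finRange (t.length + 1)).countP
          fun j => decide ((0 : Fin (t.length + 1)) < j ∧ (c :: t).get j = b)) = t.count b := by
      simp only [List.finRange_succ, List.countP_cons, List.countP_map,
        Function.comp_def, List.get_cons_succ', List.get_cons_zero]
      rw [show (fun x : Fin t.length =>
          decide ((0 : Fin (t.length + 1)) < Fin.succ x ∧ t.get x = b))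
          = fun x => decide (t.get x = b) by funext x; simp [Fin.succ_pos]]
      rw [countPos]
      simp
    show (((List.finRange (t.length + 1)).filter fun i => decide ((c :: t).get i = a)).map
      fun i => (List.finRange (t.length + 1)).countP
        fun j => decide (i < j ∧ (c :: t).get j = b)) = degList a b (c :: t)
    have hfil : (List.finRange (t.length + 1)).filter (fun i => decide ((c :: t).get i = a))
        = (if c = a then [(0 : Fin (t.length + 1))] else [])
          ++ List.map Fin.succ ((List.finRange t.length).filter fun i => decide (t.get i = a)) := by
      rw [List.finRange_succ, List.filter_cons, List.filter_map]
      by_cases h : c = a <;> simp [h, Function.comp_def]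
    rw [hfil]
    by_cases h : c = a
    · rw [if_pos h]
      simp only [List.singleton_append, List.map_cons, List.map_map, degList, if_pos h]
      refine List.cons_eq_cons.mpr ⟨head, ?_⟩
      · rw [← ih]
        apply List.map_congr_left
        intro i hi
        simpa [Function.comp_def] using inner i
    · rw [if_neg h]
      simp only [List.nil_append, List.map_map, degList, if_neg h]
      rw [← ih]
      apply List.map_congr_left
      intro i hi
      simpa [Function.comp_def] using inner i

lemma posB (a b : A) (w : List A) :
    (((List.finRange w.length).filter fun i => decide (w.get i = a)).map
      fun i => (List.finRange w.length).countP
        fun j => decide (j < (i : Fin w.length) ∧ w.get j = b))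
      = degListB a b w := by
  induction w with
  | nil => simp [degListB]
  | cons c t ih =>
    have inner : ∀ i : Fin t.length,
        ((List.finRange (t.length + 1)).countP
          fun j => decide (j < Fin.succ i ∧ (c :: t).get j = b))
        = ((List.finRange t.length).countP fun j => decide (j < i ∧ t.get j = b))
          + (if c = b then 1 else 0) := by
      intro i
      simp only [List.finRange_succ, List.countP_cons, List.countP_map,
        Function.comp_def, List.get_cons_succ', List.get_cons_zero, Fin.succ_lt_succ_iff]
      by_cases h : c = b <;> simp [h, Fin.succ_pos]
    have head : ((List.finRange (t.length + 1)).countP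
          fun j => decide (j < (0 : Fin (t.length + 1)) ∧ (c :: t).get j = b)) = 0 := by
      simp
    show (((List.finRange (t.length + 1)).filter fun i => decide ((c :: t).get i = a)).map
      fun i => (List.finRange (t.length + 1)).countP
        fun j => decide (j < i ∧ (c :: t).get j = b)) = degListB a b (c :: t)
    have hfil : (List.finRange (t.length + 1)).filter (fun i => decide ((c :: t).get i = a))
        = (if c = a then [(0 : Fin (t.length + 1))] else [])
          ++ List.map Fin.succ ((List.finRange t.length).filter fun i => decide (t.get i = a)) := by
      rw [List.finRange_succ, List.filter_cons, List.filter_map]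
      by_cases h : c = a <;> simp [h, Function.comp_def]
    rw [hfil, List.map_append, List.map_map, degListB, ← ih, List.map_map]
    congr 1
    · by_cases h : c = a <;> simp [h, head]
    · apply List.map_congr_left
      intro i hi
      simpa [Function.comp_def] using inner i


lemma pairDeg (a b : A) (hab : a ≠ b) (w : List A) :
    degList a b (pairWord a b w) = degList a b w := by
  induction w with
  | nil => simp [pairWord, degList]
  | cons c t ih =>
    rw [pairWord, List.filter_cons]
    by_cases h : c = a
    · rw [if_pos (by simp [h])]
      rw [degList, if_pos h, degList, if_pos h, ← ih, pairWord]
      congr 1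
      exact List.count_filter (by simp)
    · by_cases h' : c = b
      · rw [if_pos (by simp [h'])]
        rw [degList, if_neg h, degList, if_neg h]
        exact ih
      · rw [if_neg (by simp [h, h'])]
        rw [degList, if_neg h]
        exact ih

end ListLemmas

section TransferLemmas


variable {V A : Type*} [Fintype V] [DecidableEq A]

lemma finsetFilterVal {n : ℕ} (p : Fin n → Prop) [DecidablePred p] :
    (Finset.univ.filter p).val = ↑((List.finRange n).filter fun i => decide (p i)) := by
  simp [Finset.filter]
  rfl

lemma cardBridge {n : ℕ} (q : Fin n → Prop) [DecidablePred q] :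
    (Finset.univ.filter q).card = (List.finRange n).countP fun j => decide (q j) := by
  rw [Finset.card, finsetFilterVal]
  simp [List.countP_eq_length_filter]

lemma valBridge {n : ℕ} (p : Fin n → Prop) [DecidablePred p] (g : Fin n → ℕ) :
    (Finset.univ.filter p).val.map g
      = ↑((((List.finRange n).filter fun i => decide (p i)).map g)) := by
  rw [finsetFilterVal]
  simp [Multiset.map_coe]

lemma hmap_class (G : SimpleGraph V) (χ : V → A)
    {w : List A} {D : Set (A × A)} (f : G ≃g letterGraph D w)
    (hf : ∀ v : V, χ v = w.get (f v)) (a : A) :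
    (classFinset χ a).map f.toEquiv.toEmbedding
      = Finset.univ.filter fun i : Fin w.length => w.get i = a := by
  ext i
  simp only [Finset.mem_map, classFinset, Finset.mem_filter, Finset.mem_univ, true_and,
    Equiv.coe_toEmbedding]
  constructor
  · rintro ⟨v, hv, rfl⟩
    show w.get (f v) = a
    rw [← hf]; exact hv
  · intro hi
    refine ⟨f.toEquiv.symm i, ?_, f.toEquiv.apply_symm_apply i⟩
    rw [hf (f.toEquiv.symm i)]
    show w.get (f.toEquiv (f.toEquiv.symm i)) = a
    rw [f.toEquiv.apply_symm_apply]
    exact hi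

lemma transfer (G : SimpleGraph V) [DecidableRel G.Adj] (χ : V → A)
    {w : List A} {D : Set (A × A)} (f : G ≃g letterGraph D w)
    (hf : ∀ v : V, χ v = w.get (f v)) (a b : A)
    (R : Fin w.length → Fin w.length → Prop) [∀ i j, Decidable (R i j)]
    (hR : ∀ i j, w.get i = a → w.get j = b → ((letterGraph D w).Adj i j ↔ R i j))
    (hRb : ∀ i j, R i j → w.get j = b) :
    (classFinset χ a).val.map (fun v => ((classFinset χ b).filter fun u => G.Adj v u).card)
      = (Finset.univ.filter fun i : Fin w.length => w.get i = a).val.map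
          (fun i => (Finset.univ.filter fun j => R i j).card) := by
  rw [← hmap_class G χ f hf a, Finset.map_val, Multiset.map_map]
  apply Multiset.map_congr rfl
  intro v hv
  have hva : χ v = a := by
    simpa [classFinset] using hv
  have hgv : w.get (f v) = a := by rw [← hf]; exact hva
  simp only [Function.comp_apply, Equiv.coe_toEmbedding]
  apply Finset.card_bij (fun u _ => f.toEquiv u)
  · intro u hu
    simp only [classFinset, Finset.mem_filter, Finset.mem_univ, true_and] at hu
    obtain ⟨hub, hadj⟩ := hu
    have : (letterGraph D w).Adj (f v) (f u) := f.map_adj_iff.mpr hadj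
    simp only [Finset.mem_filter, Finset.mem_univ, true_and]
    exact (hR (f v) (f u) hgv (by rw [← hf]; exact hub)).mp this
  · intro u1 h1 u2 h2 he
    exact f.toEquiv.injective he
  · intro j hj
    simp only [Finset.mem_filter, Finset.mem_univ, true_and] at hj
    refine ⟨f.toEquiv.symm j, ?_, f.toEquiv.apply_symm_apply j⟩
    have hgj : w.get j = b := hRb _ _ hj
    have hadj : (letterGraph D w).Adj (f v) j := (hR (f v) j hgv hgj).mpr hj
    have hadj' : (letterGraph D w).Adj (f v) (f (f.toEquiv.symm j)) := by
      rwa [show (f (f.toEquiv.symm j)) = j from f.toEquiv.apply_symm_apply j]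
    have hub : χ (f.toEquiv.symm j) = b := by
      rw [hf (f.toEquiv.symm j)]
      rw [show (f (f.toEquiv.symm j)) = j from f.toEquiv.apply_symm_apply j]
      exact hgj
    simp only [classFinset, Finset.mem_filter, Finset.mem_univ, true_and]
    exact ⟨hub, f.map_adj_iff.mp hadj'⟩

end TransferLemmas

section CrossLemmas


variable {V A : Type*} [Fintype V] [DecidableEq A]
variable (G : SimpleGraph V) [DecidableRel G.Adj] (χ : V → A) {w : List A} {D : Set (A × A)}

lemma sol_mem_or (f : G ≃g letterGraph D w) (hf : ∀ v : V, χ v = w.get (f v)) (a b : A)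
    (hpos : 0 < crossCard G χ a b) : (a, b) ∈ D ∨ (b, a) ∈ D := by
  by_contra h
  push_neg at h
  obtain ⟨h1, h2⟩ := h
  have : crossCard G χ a b = 0 := by
    rw [crossCard, Finset.card_eq_zero, Finset.filter_eq_empty_iff]
    rintro ⟨u, v⟩ hp
    simp only [Finset.mem_product, classFinset, Finset.mem_filter, Finset.mem_univ,
      true_and] at hp
    intro hadj
    have := f.map_adj_iff.mpr hadj
    rcases this with ⟨-, hd⟩ | ⟨-, hd⟩
    · rw [← hf, ← hf, hp.1, hp.2] at hd; exact h1 hd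
    · rw [← hf, ← hf, hp.1, hp.2] at hd; exact h2 hd
  omega

lemma sol_not_both (f : G ≃g letterGraph D w) (hf : ∀ v : V, χ v = w.get (f v)) (a b : A)
    (hab : a ≠ b)
    (hlt : crossCard G χ a b < (classFinset χ a).card * (classFinset χ b).card)
    (h1 : (a, b) ∈ D) (h2 : (b, a) ∈ D) : False := by
  have : crossCard G χ a b = (classFinset χ a).card * (classFinset χ b).card := by
    rw [crossCard, Finset.filter_true_of_mem, Finset.card_product]
    rintro ⟨u, v⟩ hp
    simp only [Finset.mem_product, classFinset, Finset.mem_filter, Finset.mem_univ,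
      true_and] at hp
    have hne : f u ≠ f v := by
      intro he
      have : u = v := f.toEquiv.injective he
      rw [this, hp.2] at hp
      exact hab (hp.1.symm ▸ rfl)
    apply f.map_adj_iff.mp
    rcases lt_or_gt_of_ne hne with hlt' | hlt'
    · exact Or.inl ⟨hlt', by rw [← hf, ← hf, hp.1, hp.2]; exact h1⟩
    · exact Or.inr ⟨hlt', by rw [← hf, ← hf, hp.1, hp.2]; exact h2⟩
  omega


end CrossLemmas

/-- If `{a, b}` is a one-sided letter pair and `w[a, b]` is not a palindrome, then
there is a fixed `d ∈ {(a, b), (b, a)}` contained in every solution of the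
Decoder Retrieval instance. -/
theorem forced_decoder_word_of_not_palindrome {V A : Type*} [Fintype V] [Fintype A] [DecidableEq A]
    (G : SimpleGraph V) [DecidableRel G.Adj] (χ : V → A) (w : List A)
    (hcls : ∀ b : A, ∃ v : V, χ v = b)
    (hlen : w.length = Fintype.card V)
    (hcount : ∀ b : A, w.count b = (Finset.univ.filter fun v => χ v = b).card)
    (a b : A) (hos : OneSided G χ a b)
    (hpal : pairWord a b w ≠ (pairWord a b w).reverse) :
    ∃ d ∈ ({(a, b), (b, a)} : Set (A × A)),
      ∀ D : Set (A × A), IsSolution G χ w D → d ∈ D := by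
  obtain ⟨hab, hpos, hlt⟩ := hos
  by_cases hall : ∀ D : Set (A × A), IsSolution G χ w D → (a, b) ∈ D
  · exact ⟨(a, b), by simp, hall⟩
  push_neg at hall
  obtain ⟨D1, hsol1, hD1ab⟩ := hall
  refine ⟨(b, a), by simp, ?_⟩
  intro D hsolD
  by_contra hDba
  obtain ⟨f, hf⟩ := hsolD
  obtain ⟨f1, hf1⟩ := hsol1
  have hDab : (a, b) ∈ D := (sol_mem_or G χ f hf a b hpos).resolve_right hDba
  have hD1ba : (b, a) ∈ D1 := (sol_mem_or G χ f1 hf1 a b hpos).resolve_left hD1ab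
  have hD1ab' : (a, b) ∉ D1 := hD1ab
  have hR : ∀ i j : Fin w.length, w.get i = a → w.get j = b →
      ((letterGraph D w).Adj i j ↔ ((i : Fin w.length) < j ∧ w.get j = b)) := by
    intro i j hi hj
    constructor
    · rintro (⟨hlt', -⟩ | ⟨-, hd⟩)
      · exact ⟨hlt', hj⟩
      · rw [hj, hi] at hd; exact absurd hd hDba
    · rintro ⟨hlt', -⟩
      exact Or.inl ⟨hlt', by rw [hi, hj]; exact hDab⟩
  have hR1 : ∀ i j : Fin w.length, w.get i = a → w.get j = b →
      ((letterGraph D1 w).Adj i j ↔ ((j : Fin w.length) < i ∧ w.get j = b)) := by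
    intro i j hi hj
    constructor
    · rintro (⟨-, hd⟩ | ⟨hlt', -⟩)
      · rw [hi, hj] at hd; exact absurd hd hD1ab'
      · exact ⟨hlt', hj⟩
    · rintro ⟨hlt', -⟩
      exact Or.inr ⟨hlt', by rw [hi, hj]; exact hD1ba⟩
  have e1 := transfer G χ f hf a b (fun i j => (i : Fin w.length) < j ∧ w.get j = b) hR
    (fun i j h => h.2)
  have e2 := transfer G χ f1 hf1 a b (fun i j => (j : Fin w.length) < i ∧ w.get j = b) hR1
    (fun i j h => h.2)
  rw [valBridge] at e1 e2
  have c1 : (((List.finRange w.length).filter fun i => decide (w.get i = a)).map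
      fun i => (Finset.univ.filter fun j => (i : Fin w.length) < j ∧ w.get j = b).card)
      = degList a b w := by
    rw [← posA a b w]
    apply List.map_congr_left
    intro i _
    exact cardBridge _
  have c2 : (((List.finRange w.length).filter fun i => decide (w.get i = a)).map
      fun i => (Finset.univ.filter fun j => (j : Fin w.length) < i ∧ w.get j = b).card)
      = degListB a b w := by
    rw [← posB a b w]
    apply List.map_congr_left
    intro i _
    exact cardBridge _
  rw [c1] at e1
  rw [c2] at e2
  have key : (↑(degList a b w) : Multiset ℕ) = ↑(degList a b w.reverse) := by
    rw [← e1, e2, revDeg]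
  set u := pairWord a b w with hu
  have h1 : degList a b u = degList a b w := pairDeg a b hab w
  have h2 : degList a b u.reverse = degList a b w.reverse := by
    rw [show u.reverse = pairWord a b w.reverse from (List.filter_reverse (l := w)).symm]
    exact pairDeg a b hab w.reverse
  have hM : (↑(degList a b u) : Multiset ℕ) = ↑(degList a b u.reverse) := by
    rw [h1, h2]; exact key
  have halph : ∀ c ∈ u, c = a ∨ c = b := by
    intro c hc
    simpa using (List.mem_filter.mp hc).2
  have halph' : ∀ c ∈ u.reverse, c = a ∨ c = b := by
    intro c hc
    exact halph c (List.mem_reverse.mp hc)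
  exact hpal (degInj a b hab u u.reverse halph halph'
    (List.count_reverse (a := a) (l := u)).symm (List.count_reverse (a := b) (l := u)).symm hM)
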